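/- Multiclass PCNGD descent inequality: let f⁰, …, f^{L-1} be L₂-smooth with ∇f^i(x_t) ≠ 0 for all i, and x_{t+1} = x_t - η_t Σ_i ∇f^i(x_t)/‖∇f^i(x_t)‖. Then for class 0 (assuming s := Σ_{i≠0} ∇f^i(x_t)/‖∇f^i(x_t)‖ ≠ 0): f⁰(x_{t+1}) ≤ f⁰(x_t) - η_t(1 + ‖s‖cos α(x_t))‖∇f⁰(x_t)‖ + (L₂/2)L² η_t², where α(x_t) is the angle between ∇f⁰(x_t) and s. -/

import Mathlib

open RealInnerProductSpace


lemma my_descent {m : ℕ} {f : EuclideanSpace ℝ (Fin m) → ℝ} {L2 : ℝ} (hL2 : 0 ≤ L2)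
    (hdiff : Differentiable ℝ f) (hlip : LipschitzWith ⟨L2, hL2⟩ (gradient f))
    (x y : EuclideanSpace ℝ (Fin m)) :
    f y ≤ f x + ⟪gradient f x, y - x⟫ + L2 / 2 * ‖y - x‖ ^ 2 := by
  set v := y - x with hv
  set φ : ℝ → ℝ := fun τ => ⟪gradient f (x + τ • v), v⟫ with hφ
  have hinner : ∀ p w, ⟪gradient f p, w⟫ = fderiv ℝ f p w := by
    intro p w
    rw [gradient, ← InnerProductSpace.toDual_apply_apply,
      LinearIsometryEquiv.apply_symm_apply]
  have hderiv : ∀ τ : ℝ, HasDerivAt (fun τ : ℝ => f (x + τ • v)) (φ τ) τ := by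
    intro τ
    have hγ : HasDerivAt (fun τ : ℝ => x + τ • v) v τ := by
      simpa using ((hasDerivAt_id τ).smul_const v).const_add x
    have := (hdiff (x + τ • v)).hasFDerivAt.comp_hasDerivAt τ hγ
    simpa [hφ, hinner, Function.comp_def] using this
  have hcontg : Continuous fun τ : ℝ => gradient f (x + τ • v) :=
    hlip.continuous.comp (continuous_const.add (continuous_id.smul continuous_const))
  have hcontφ : Continuous φ := hcontg.inner continuous_const
  have hint : f y - f x = ∫ τ in (0:ℝ)..1, φ τ := by
    have := intervalIntegral.integral_eq_sub_of_hasDerivAt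
      (f := fun τ : ℝ => f (x + τ • v)) (f' := φ) (a := (0:ℝ)) (b := 1)
      (fun τ _ => hderiv τ) (hcontφ.intervalIntegrable 0 1)
    simpa [hv] using this.symm
  have hbound : ∀ τ ∈ Set.Icc (0:ℝ) 1, φ τ ≤ φ 0 + L2 * τ * ‖v‖ ^ 2 := by
    intro τ hτ
    have h1 : φ τ - φ 0 = ⟪gradient f (x + τ • v) - gradient f (x + (0:ℝ) • v), v⟫ := by
      rw [inner_sub_left]
    have h2 : φ τ - φ 0 ≤ ‖gradient f (x + τ • v) - gradient f (x + (0:ℝ) • v)‖ * ‖v‖ := by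
      rw [h1]; exact real_inner_le_norm _ _
    have h3 : ‖gradient f (x + τ • v) - gradient f (x + (0:ℝ) • v)‖ ≤ L2 * (τ * ‖v‖) := by
      have := hlip.dist_le_mul (x + τ • v) (x + (0:ℝ) • v)
      rw [dist_eq_norm] at this
      have hd : ‖(x + τ • v) - (x + (0:ℝ) • v)‖ = τ * ‖v‖ := by
        simp [norm_smul, abs_of_nonneg hτ.1]
      calc _ ≤ (⟨L2, hL2⟩ : NNReal) * ‖(x + τ • v) - (x + (0:ℝ) • v)‖ := this
        _ = L2 * (τ * ‖v‖) := by rw [hd]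
    nlinarith [norm_nonneg v, mul_le_mul_of_nonneg_right h3 (norm_nonneg v)]
  have hintle : (∫ τ in (0:ℝ)..1, φ τ) ≤ ∫ τ in (0:ℝ)..1, (φ 0 + L2 * τ * ‖v‖ ^ 2) := by
    apply intervalIntegral.integral_mono_on (by norm_num)
      (hcontφ.intervalIntegrable 0 1)
      ((continuous_const.add ((continuous_const.mul continuous_id).mul continuous_const) : Continuous fun τ : ℝ => φ 0 + L2 * τ * ‖v‖ ^ 2).intervalIntegrable 0 1)
    exact hbound
  have hrhs : (∫ τ in (0:ℝ)..1, (φ 0 + L2 * τ * ‖v‖ ^ 2)) = φ 0 + L2 / 2 * ‖v‖ ^ 2 := by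
    rw [show (fun τ : ℝ => φ 0 + L2 * τ * ‖v‖ ^ 2) = fun τ : ℝ => φ 0 + (L2 * ‖v‖ ^ 2) * τ
      from by funext τ; ring]
    have i2 : IntervalIntegrable (fun τ : ℝ => (L2 * ‖v‖ ^ 2) * τ)
        MeasureTheory.volume 0 1 :=
      ((continuous_const.mul continuous_id').intervalIntegrable 0 1)
    rw [intervalIntegral.integral_add (intervalIntegrable_const) i2,
      intervalIntegral.integral_const_mul, integral_id]
    simp
    ring
  have hφ0 : φ 0 = ⟪gradient f x, v⟫ := by simp [hφ]
  have := hint.le.trans (hintle.trans hrhs.le)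
  linarith [this, hφ0 ▸ this]


/-- Multiclass PCNGD descent inequality for class `0`:
`f⁰(x_{t+1}) ≤ f⁰(x_t) - η_t (1 + ‖s‖ cos α(x_t)) ‖∇f⁰(x_t)‖ + (L₂/2) L² η_t²`. -/
theorem stmt18 {m L : ℕ} (hL : 0 < L)
    (f : Fin L → (EuclideanSpace ℝ (Fin m) → ℝ)) (L2 : ℝ) (hL2 : 0 ≤ L2)
    (hdiff : ∀ i, Differentiable ℝ (f i))
    (hlip : ∀ i, LipschitzWith ⟨L2, hL2⟩ (gradient (f i)))
    (x : ℕ → EuclideanSpace ℝ (Fin m)) (η : ℕ → ℝ) (t : ℕ)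
    (hg : ∀ i, gradient (f i) (x t) ≠ 0)
    (s : EuclideanSpace ℝ (Fin m))
    (hs : s = ∑ i ∈ Finset.univ.erase (⟨0, hL⟩ : Fin L),
      ‖gradient (f i) (x t)‖⁻¹ • gradient (f i) (x t))
    (hsne : s ≠ 0)
    (cosα : ℝ)
    (hcos : cosα = ⟪gradient (f ⟨0, hL⟩) (x t), s⟫ /
      (‖gradient (f ⟨0, hL⟩) (x t)‖ * ‖s‖))
    (hstep : x (t + 1) = x t
      - η t • ∑ i, ‖gradient (f i) (x t)‖⁻¹ • gradient (f i) (x t)) :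
    f ⟨0, hL⟩ (x (t + 1)) ≤ f ⟨0, hL⟩ (x t)
      - η t * (1 + ‖s‖ * cosα) * ‖gradient (f ⟨0, hL⟩) (x t)‖
      + (L2 / 2) * (L : ℝ) ^ 2 * (η t) ^ 2 := by
  have key := my_descent hL2 (hdiff ⟨0, hL⟩) (hlip ⟨0, hL⟩) (x t) (x (t + 1))
  set g0 := gradient (f ⟨0, hL⟩) (x t) with hg0
  set u : Fin L → EuclideanSpace ℝ (Fin m) :=
    fun i => ‖gradient (f i) (x t)‖⁻¹ • gradient (f i) (x t) with hu
  have hg0ne : ‖g0‖ ≠ 0 := norm_ne_zero_iff.2 (hg _)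
  have hsn : ‖s‖ ≠ 0 := norm_ne_zero_iff.2 hsne
  have hv : x (t + 1) - x t = -(η t) • ∑ i, u i := by
    rw [hstep, neg_smul]; exact sub_sub_cancel_left _ _
  have hunorm : ∀ i, ‖u i‖ = 1 := by
    intro i
    have : ‖gradient (f i) (x t)‖ ≠ 0 := norm_ne_zero_iff.2 (hg i)
    simp [hu, norm_smul, abs_of_nonneg (inv_nonneg.2 (norm_nonneg _)),
      inv_mul_cancel₀ this]
  have hS : ‖∑ i, u i‖ ≤ (L : ℝ) := by
    calc ‖∑ i, u i‖ ≤ ∑ i, ‖u i‖ := norm_sum_le _ _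
      _ = (L : ℝ) := by simp [hunorm]
  have hsum : ∑ i, u i = u ⟨0, hL⟩ + s := by
    rw [hs]; exact (Finset.add_sum_erase _ _ (Finset.mem_univ _)).symm
  have hip0 : ⟪g0, u ⟨0, hL⟩⟫ = ‖g0‖ := by
    rw [hu]
    simp only [real_inner_smul_right, real_inner_self_eq_norm_sq, ← hg0]
    field_simp
  have hips : ⟪g0, s⟫ = cosα * (‖g0‖ * ‖s‖) := by
    rw [hcos]
    field_simp
  have hinnerv : ⟪g0, x (t + 1) - x t⟫ = -(η t * (1 + ‖s‖ * cosα) * ‖g0‖) := by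
    rw [hv, real_inner_smul_right, hsum, inner_add_right, hip0, hips]
    ring
  have hnv : ‖x (t + 1) - x t‖ ≤ |η t| * (L : ℝ) := by
    rw [hv, norm_smul]
    simp only [norm_neg, Real.norm_eq_abs]
    exact mul_le_mul_of_nonneg_left hS (abs_nonneg _)
  have hnv2 : ‖x (t + 1) - x t‖ ^ 2 ≤ (L : ℝ) ^ 2 * η t ^ 2 := by
    calc ‖x (t + 1) - x t‖ ^ 2 ≤ (|η t| * (L : ℝ)) ^ 2 :=
          pow_le_pow_left₀ (norm_nonneg _) hnv 2
      _ = (L : ℝ) ^ 2 * η t ^ 2 := by rw [mul_pow, sq_abs]; ring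
  have hfin : L2 / 2 * ‖x (t + 1) - x t‖ ^ 2 ≤ L2 / 2 * ((L : ℝ) ^ 2 * η t ^ 2) :=
    mul_le_mul_of_nonneg_left hnv2 (by positivity)
  rw [hinnerv] at key
  linarith
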